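/- Let I ⊆ ℝ be an open interval, let ζ, R : ℝ → ℝ be twice continuously differentiable on I with ζ(r) ≠ 0, R(r) ≠ 0 and R'(r)ζ(r) + R(r)ζ'(r) ≠ 0 for all r ∈ I. Fix r₀ ∈ I and λ ∈ ℝ, and define Δ : I → ℝ by Δ(r) = λ · (R(r)ζ(r)/(R'(r)ζ(r)+R(r)ζ'(r)))² · exp( 2 ∫_{r₀}^{r} (ζ'(s)/ζ(s)) · (R'(s)ζ(s) − R(s)ζ'(s))/(R'(s)ζ(s) + R(s)ζ'(s)) ds ). Then for all r ∈ I: R(r)·(R'(r)ζ(r)+R(r)ζ'(r))·Δ'(r) + 2·(R(r)R''(r)ζ(r) + R(r)²ζ''(r) − R(r)R'(r)ζ'(r) − R'(r)²ζ(r))·Δ(r) = 0. -/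

import Mathlib

/-- Key lemma for the first general-diagonal solution-generating theorem: the displacement
`Δ(r) = λ (Rζ/(Rζ)')² exp(2 ∫ (ζ'/ζ)·(R'ζ − Rζ')/(R'ζ + Rζ'))` satisfies the homogeneous
first-order linear ODE obtained from the pressure-isotropy condition. -/
theorem general_diagonal_one_lemma
    (a b : ℝ) (ζ R : ℝ → ℝ)
    (hζ : ContDiffOn ℝ 2 ζ (Set.Ioo a b))
    (hR : ContDiffOn ℝ 2 R (Set.Ioo a b))
    (hζ0 : ∀ r ∈ Set.Ioo a b, ζ r ≠ 0)
    (hR0 : ∀ r ∈ Set.Ioo a b, R r ≠ 0)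
    (hRζ0 : ∀ r ∈ Set.Ioo a b, deriv R r * ζ r + R r * deriv ζ r ≠ 0)
    (r₀ : ℝ) (hr₀ : r₀ ∈ Set.Ioo a b) (lam : ℝ) (Δ : ℝ → ℝ)
    (hΔ : ∀ r ∈ Set.Ioo a b,
      Δ r = lam * (R r * ζ r / (deriv R r * ζ r + R r * deriv ζ r)) ^ 2 *
        Real.exp (2 * ∫ s in r₀..r,
          (deriv ζ s / ζ s) *
            ((deriv R s * ζ s - R s * deriv ζ s) / (deriv R s * ζ s + R s * deriv ζ s)))) :
    ∀ r ∈ Set.Ioo a b,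
      R r * (deriv R r * ζ r + R r * deriv ζ r) * deriv Δ r
        + 2 * (R r * deriv (deriv R) r * ζ r + (R r) ^ 2 * deriv (deriv ζ) r
            - R r * deriv R r * deriv ζ r - (deriv R r) ^ 2 * ζ r) * Δ r = 0 := by
  intro r hr
  have hIo : IsOpen (Set.Ioo a b) := isOpen_Ioo
  set h : ℝ → ℝ := fun s =>
    (deriv ζ s / ζ s) *
      ((deriv R s * ζ s - R s * deriv ζ s) / (deriv R s * ζ s + R s * deriv ζ s)) with hh
  set F : ℝ → ℝ := fun x =>
    lam * (R x * ζ x / (deriv R x * ζ x + R x * deriv ζ x)) ^ 2 *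
      Real.exp (2 * ∫ s in r₀..x, h s) with hF
  -- regularity of deriv ζ, deriv R on the open interval
  have hζ1 : ContDiffOn ℝ 1 (deriv ζ) (Set.Ioo a b) :=
    hζ.deriv_of_isOpen hIo (by norm_num)
  have hR1 : ContDiffOn ℝ 1 (deriv R) (Set.Ioo a b) :=
    hR.deriv_of_isOpen hIo (by norm_num)
  -- pointwise derivatives at r
  have hζd : HasDerivAt ζ (deriv ζ r) r :=
    ((hζ.differentiableOn (by norm_num)).differentiableAt (hIo.mem_nhds hr)).hasDerivAt
  have hRd : HasDerivAt R (deriv R r) r :=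
    ((hR.differentiableOn (by norm_num)).differentiableAt (hIo.mem_nhds hr)).hasDerivAt
  have hζ2 : HasDerivAt (deriv ζ) (deriv (deriv ζ) r) r :=
    ((hζ1.differentiableOn (by norm_num)).differentiableAt (hIo.mem_nhds hr)).hasDerivAt
  have hR2 : HasDerivAt (deriv R) (deriv (deriv R) r) r :=
    ((hR1.differentiableOn (by norm_num)).differentiableAt (hIo.mem_nhds hr)).hasDerivAt
  -- continuity of the integrand
  have hcont : ContinuousOn h (Set.Ioo a b) := by
    apply ContinuousOn.mul
    · exact (hζ1.continuousOn.div hζ.continuousOn hζ0)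
    · exact (((hR1.continuousOn.mul hζ.continuousOn).sub
        (hR.continuousOn.mul hζ1.continuousOn)).div
        ((hR1.continuousOn.mul hζ.continuousOn).add
          (hR.continuousOn.mul hζ1.continuousOn)) hRζ0)
  -- FTC: derivative of the integral
  have hE : HasDerivAt (fun x => ∫ s in r₀..x, h s) (h r) r := by
    refine intervalIntegral.integral_hasDerivAt_right ?_ ?_ ?_
    · exact (hcont.mono (Set.ordConnected_Ioo.uIcc_subset hr₀ hr)).intervalIntegrable
    · exact hcont.stronglyMeasurableAtFilter hIo r hr
    · exact hcont.continuousAt (hIo.mem_nhds hr)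
  have hW : deriv R r * ζ r + R r * deriv ζ r ≠ 0 := hRζ0 r hr
  have hζr : ζ r ≠ 0 := hζ0 r hr
  -- derivative of the quotient g = Rζ / (R'ζ + Rζ')
  have hg : HasDerivAt (fun x => R x * ζ x / (deriv R x * ζ x + R x * deriv ζ x))
      (((deriv R r * ζ r + R r * deriv ζ r) * (deriv R r * ζ r + R r * deriv ζ r)
        - R r * ζ r * (deriv (deriv R) r * ζ r + deriv R r * deriv ζ r
            + (deriv R r * deriv ζ r + R r * deriv (deriv ζ) r)))
        / (deriv R r * ζ r + R r * deriv ζ r) ^ 2) r :=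
    (hRd.mul hζd).div ((hR2.mul hζd).add (hRd.mul hζ2)) hW
  have hFd : HasDerivAt F
      ((lam * (2 * (R r * ζ r / (deriv R r * ζ r + R r * deriv ζ r)) ^ 1 *
        (((deriv R r * ζ r + R r * deriv ζ r) * (deriv R r * ζ r + R r * deriv ζ r)
          - R r * ζ r * (deriv (deriv R) r * ζ r + deriv R r * deriv ζ r
              + (deriv R r * deriv ζ r + R r * deriv (deriv ζ) r)))
          / (deriv R r * ζ r + R r * deriv ζ r) ^ 2))) *
        Real.exp (2 * ∫ s in r₀..r, h s)
        + lam * (R r * ζ r / (deriv R r * ζ r + R r * deriv ζ r)) ^ 2 *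
          (Real.exp (2 * ∫ s in r₀..r, h s) * (2 * h r))) r := by
    have := ((hg.pow 2).const_mul lam).mul ((hE.const_mul 2).exp)
    simp at this
    rw [pow_one]
    exact this
  have hΔF : Δ =ᶠ[nhds r] F :=
    Filter.eventuallyEq_of_mem (hIo.mem_nhds hr) (fun x hx => hΔ x hx)
  rw [hΔF.deriv_eq, hFd.deriv, hΔ r hr]
  rw [hh]
  have hexp : Real.exp (2 * ∫ s in r₀..r, h s) ≠ 0 := Real.exp_ne_zero _
  field_simp
  ring
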